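/- Let α > 0 be real and N ≥ 1 a natural number. For every natural number y with y ≤ N, the maximum over i ∈ {0,1,...,N−1} of the secant-cut values e^{−iα}(1 + i − i·e^{−α}) − e^{−iα}(1 − e^{−α})·y equals e^{−αy}. (Hence the N secant cuts indexed i = 0,...,N−1 exactly represent e^{−αy} on integers 0 ≤ y ≤ N, which makes the linearization CSP-L equivalent to SP and shows that the cut indexed i = N is unnecessary.) -/
import Mathlib

private lemma secant_key (x : ℝ) (hx0 : 0 < x) (hx1 : x ≤ 1) (m : ℕ) :
    x ^ m * (1 + m * (1 - x)) ≤ 1 := by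
  have h1 : (1 : ℝ) + m * (1 - x) ≤ (2 - x) ^ m := by
    have := one_add_mul_le_pow (a := 1 - x) (by linarith) m
    have h2 : (1 : ℝ) + (1 - x) = 2 - x := by ring
    rwa [h2] at this
  have hpos : (0 : ℝ) ≤ 1 + m * (1 - x) := by
    have : (0:ℝ) ≤ (m:ℝ) * (1 - x) := mul_nonneg (Nat.cast_nonneg m) (by linarith)
    linarith
  calc x ^ m * (1 + m * (1 - x)) ≤ x ^ m * (2 - x) ^ m :=
        mul_le_mul_of_nonneg_left h1 (pow_nonneg hx0.le m)
    _ = (x * (2 - x)) ^ m := (mul_pow _ _ _).symm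
    _ ≤ 1 ^ m := by
        apply pow_le_pow_left₀ (mul_nonneg hx0.le (by linarith)) (by nlinarith)
    _ = 1 := one_pow m

theorem secant_cuts_exact (α : ℝ) (hα : 0 < α) (N : ℕ) (hN : 1 ≤ N)
    (y : ℕ) (hy : y ≤ N) :
    IsGreatest
      {v : ℝ | ∃ i < N,
        v = Real.exp (-(i * α)) * (1 + (i : ℝ) - (i : ℝ) * Real.exp (-α))
            - Real.exp (-(i * α)) * (1 - Real.exp (-α)) * (y : ℝ)}
      (Real.exp (-(α * y))) := by
  set x := Real.exp (-α) with hxdef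
  have hx0 : 0 < x := Real.exp_pos _
  have hx1 : x ≤ 1 := by
    rw [hxdef]
    exact Real.exp_le_one_iff.mpr (by linarith)
  have hexp : ∀ n : ℕ, Real.exp (-(n * α)) = x ^ n := by
    intro n
    rw [hxdef, ← Real.exp_nat_mul]
    ring_nf
  have hexpy : Real.exp (-(α * y)) = x ^ y := by
    rw [hxdef, ← Real.exp_nat_mul]
    ring_nf
  constructor
  · -- membership
    by_cases hyN : y < N
    · refine ⟨y, hyN, ?_⟩
      rw [hexp y, hexpy]
      ring
    · have hyeq : y = N := le_antisymm hy (not_lt.mp hyN)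
      refine ⟨N - 1, Nat.sub_lt (by omega) one_pos, ?_⟩
      rw [hexp (N-1), hexpy, hyeq]
      have hcast : ((N - 1 : ℕ) : ℝ) = (N : ℝ) - 1 := by
        rw [Nat.cast_sub hN]; norm_num
      have hpow : x ^ N = x ^ (N - 1) * x := by
        rw [← pow_succ, Nat.sub_add_cancel hN]
      rw [hcast, hpow]
      ring
  · -- upper bound
    rintro v ⟨i, hi, rfl⟩
    rw [hexp i, hexpy]
    rcases le_or_gt i y with h | h
    · -- i ≤ y
      obtain ⟨m, rfl⟩ := Nat.exists_eq_add_of_le h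
      have hcast : ((i + m : ℕ) : ℝ) = (i : ℝ) + m := by push_cast; ring
      have hb : (1 : ℝ) + m * (x - 1) ≤ x ^ m :=
        one_add_mul_sub_le_pow (by linarith) m
      calc x ^ i * (1 + (i:ℝ) - (i:ℝ) * x) - x ^ i * (1 - x) * ((i + m : ℕ) : ℝ)
          = x ^ i * (1 + m * (x - 1)) := by rw [hcast]; ring
        _ ≤ x ^ i * x ^ m := mul_le_mul_of_nonneg_left hb (pow_nonneg hx0.le i)
        _ = x ^ (i + m) := (pow_add x i m).symm
    · -- y < i
      obtain ⟨m, rfl⟩ := Nat.exists_eq_add_of_le h.le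
      have hcast : ((y + m : ℕ) : ℝ) = (y : ℝ) + m := by push_cast; ring
      have hb := secant_key x hx0 hx1 m
      calc x ^ (y + m) * (1 + ((y + m : ℕ) : ℝ) - ((y + m : ℕ) : ℝ) * x)
            - x ^ (y + m) * (1 - x) * (y : ℝ)
          = x ^ y * (x ^ m * (1 + m * (1 - x))) := by
            rw [hcast, pow_add]; ring
        _ ≤ x ^ y * 1 := mul_le_mul_of_nonneg_left hb (pow_nonneg hx0.le y)
        _ = x ^ y := mul_one _
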